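/- Let $\theta$ solve $\theta_t' = \theta_t(p - \frac{|X_t|\theta_t}{\sqrt{2\pi}})$ with $\theta_0 > 0$. Then for all $t>0$: $\frac{1}{t}\int_0^t |X_u|\theta_u\,du \le \sqrt{2\pi}\,p + \frac{1}{t}\int_0^t |X_u|\,du + \sqrt{2\pi}\,\frac{\log(1+\theta_0)}{t}$. -/

import Mathlib

open MeasureTheory Real

/-- For `θ` solving `θ' = θ (p - |X| θ / √(2π))` with `θ 0 > 0`:
`(1/t) ∫_0^t |X u| θ u du ≤ √(2π) p + (1/t) ∫_0^t |X u| du + √(2π) log(1+θ 0)/t`. -/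
theorem stmt_12 (p : ℝ) (hp : 0 < p) (X θ : ℝ → ℝ)
    (hX : Continuous X)
    (hθpos : ∀ t, 0 < θ t)
    (hode : ∀ t, HasDerivAt θ (θ t * (p - |X t| * θ t / Real.sqrt (2 * Real.pi))) t) :
    ∀ t, 0 < t →
      (1 / t) * ∫ u in (0:ℝ)..t, |X u| * θ u
        ≤ Real.sqrt (2 * Real.pi) * p + (1 / t) * (∫ u in (0:ℝ)..t, |X u|)
            + Real.sqrt (2 * Real.pi) * Real.log (1 + θ 0) / t := by
  intro t ht
  set s := Real.sqrt (2 * Real.pi) with hs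
  have hspos : 0 < s := Real.sqrt_pos.2 (by positivity)
  have hθdiff : Differentiable ℝ θ := fun u => (hode u).differentiableAt
  have hθcont : Continuous θ := hθdiff.continuous
  have h1 : ∀ u, (0:ℝ) < 1 + θ u := fun u => by linarith [hθpos u]
  set f' : ℝ → ℝ := fun u => θ u * (p - |X u| * θ u / s) / (1 + θ u) with hf'
  have hlog : ∀ u, HasDerivAt (fun v => Real.log (1 + θ v)) (f' u) u := fun u =>
    ((hode u).const_add 1).log (h1 u).ne'
  have hcont' : Continuous f' :=
    (hθcont.mul (continuous_const.sub ((hX.abs.mul hθcont).div_const s))).div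
      (continuous_const.add hθcont) (fun u => (h1 u).ne')
  have hint : ∫ u in (0:ℝ)..t, f' u = Real.log (1 + θ t) - Real.log (1 + θ 0) :=
    intervalIntegral.integral_eq_sub_of_hasDerivAt (fun u _ => hlog u)
      (hcont'.intervalIntegrable 0 t)
  have key : ∀ u, |X u| * θ u ≤ |X u| + s * p - s * f' u := by
    intro u
    have hD := h1 u
    have heq : s * f' u = θ u * (s * p - |X u| * θ u) / (1 + θ u) := by
      rw [hf']
      field_simp
    have h2 : θ u * (s * p - |X u| * θ u) ≤ (|X u| + s * p - |X u| * θ u) * (1 + θ u) := by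
      nlinarith [abs_nonneg (X u), hθpos u, hspos, hp]
    have h3 : θ u * (s * p - |X u| * θ u) / (1 + θ u) ≤ |X u| + s * p - |X u| * θ u :=
      (div_le_iff₀ hD).2 h2
    rw [heq] at *
    linarith
  have hi1 : IntervalIntegrable (fun u => |X u| * θ u) volume 0 t :=
    (hX.abs.mul hθcont).intervalIntegrable 0 t
  have hi2 : IntervalIntegrable (fun u => |X u| + s * p - s * f' u) volume 0 t :=
    (((hX.abs.add continuous_const).sub (continuous_const.mul hcont'))).intervalIntegrable 0 t
  have hmono : (∫ u in (0:ℝ)..t, |X u| * θ u)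
      ≤ ∫ u in (0:ℝ)..t, (|X u| + s * p - s * f' u) :=
    intervalIntegral.integral_mono_on ht.le hi1 hi2 (fun u _ => key u)
  have hsplit : (∫ u in (0:ℝ)..t, (|X u| + s * p - s * f' u))
      = (∫ u in (0:ℝ)..t, |X u|) + s * p * t
        - s * (Real.log (1 + θ t) - Real.log (1 + θ 0)) := by
    rw [intervalIntegral.integral_sub (f := fun u => |X u| + s * p) (g := fun u => s * f' u)
        ((hX.abs.add continuous_const).intervalIntegrable 0 t)
        ((continuous_const.mul hcont').intervalIntegrable 0 t),
      intervalIntegral.integral_add (hX.abs.intervalIntegrable 0 t)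
        (intervalIntegrable_const),
      intervalIntegral.integral_const_mul, intervalIntegral.integral_const_mul, hint,
      intervalIntegral.integral_const]
    simp only [smul_eq_mul]
    ring
  have hlogt : 0 ≤ Real.log (1 + θ t) := Real.log_nonneg (by linarith [hθpos t])
  have hA : (∫ u in (0:ℝ)..t, |X u| * θ u)
      ≤ (∫ u in (0:ℝ)..t, |X u|) + s * p * t + s * Real.log (1 + θ 0) := by
    have := hmono
    rw [hsplit] at this
    nlinarith [hspos, hlogt]
  have htinv : (0:ℝ) < 1 / t := by positivity
  calc (1 / t) * ∫ u in (0:ℝ)..t, |X u| * θ u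
      ≤ (1 / t) * ((∫ u in (0:ℝ)..t, |X u|) + s * p * t + s * Real.log (1 + θ 0)) :=
        mul_le_mul_of_nonneg_left hA htinv.le
    _ = s * p + (1 / t) * (∫ u in (0:ℝ)..t, |X u|) + s * Real.log (1 + θ 0) / t := by
        field_simp
        ring
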